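/- For every positive integer n, the smallest positive integer c such that c·P' is integer-valued for every integer-valued polynomial P of degree ≤ n equals lcm(1,2,...,n). -/

import Mathlib

open Polynomial

/-- A polynomial `P ∈ ℚ[X]` is integer-valued if it takes integer values at all integers. -/
def IntValued (P : Polynomial ℚ) : Prop := ∀ m : ℤ, ∃ z : ℤ, P.eval (m : ℚ) = (z : ℚ)

namespace IVAux

open Finset fwdDiff

/-- The forward difference operator on polynomials. -/
noncomputable def Δp (P : ℚ[X]) : ℚ[X] := P.comp (X + 1) - P

lemma Δp_zero : Δp 0 = 0 := by simp [Δp]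

lemma Δp_eval (P : ℚ[X]) (x : ℚ) : (Δp P).eval x = P.eval (x + 1) - P.eval x := by
  simp [Δp, eval_comp]

lemma Δp_natDegree_le {P : ℚ[X]} {d : ℕ} (h : P.natDegree ≤ d + 1) :
    (Δp P).natDegree ≤ d := by
  rcases eq_or_ne (Δp P) 0 with h0 | h0
  · simp [h0]
  rcases Nat.eq_zero_or_pos P.natDegree with hd | hd
  · obtain ⟨a, rfl⟩ := natDegree_eq_zero.mp hd
    simp [Δp] at h0
  · have hP0 : P ≠ 0 := fun hh => by simp [hh] at hd
    have hq : (X + 1 : ℚ[X]) = X + C 1 := by simp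
    have hqdeg : (X + 1 : ℚ[X]).natDegree = 1 := by rw [hq]; exact natDegree_X_add_C 1
    have hcomp_deg : (P.comp (X + 1)).natDegree = P.natDegree := by
      rw [natDegree_comp, hqdeg, mul_one]
    have hlc : (P.comp (X + 1)).leadingCoeff = P.leadingCoeff := by
      rw [leadingCoeff_comp (by rw [hqdeg]; norm_num)]
      have : (X + 1 : ℚ[X]).leadingCoeff = 1 := by
        rw [hq]; exact (monic_X_add_C 1)
      rw [this, one_pow, mul_one]
    have hcomp0 : P.comp (X + 1) ≠ 0 := by
      intro hh
      rw [hh] at hcomp_deg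
      simp at hcomp_deg
      omega
    have hdeq : (P.comp (X + 1)).degree = P.degree := by
      rw [degree_eq_natDegree hcomp0, degree_eq_natDegree hP0, hcomp_deg]
    have hlt : (Δp P).degree < (P.comp (X + 1)).degree :=
      degree_sub_lt hdeq hcomp0 hlc
    rw [hdeq] at hlt
    have : (Δp P).natDegree < P.natDegree := natDegree_lt_natDegree h0 hlt
    omega

lemma Δp_iter_natDegree_le (k : ℕ) {d : ℕ} {P : ℚ[X]} (h : P.natDegree ≤ d + k) :
    (Δp^[k] P).natDegree ≤ d := by
  induction k generalizing P with
  | zero => simpa using h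
  | succ k ih =>
    rw [Function.iterate_succ_apply]
    exact ih (Δp_natDegree_le (by omega : P.natDegree ≤ (d + k) + 1))

lemma Δp_iter_eq_zero {n : ℕ} {P : ℚ[X]} (h : P.natDegree ≤ n) {k : ℕ} (hk : n < k) :
    Δp^[k] P = 0 := by
  have h1 : Δp^[n + 1] P = 0 := by
    rw [Function.iterate_succ_apply']
    have hd : (Δp^[n] P).natDegree ≤ 0 := Δp_iter_natDegree_le n (by omega)
    obtain ⟨a, ha⟩ := natDegree_eq_zero.mp (Nat.le_zero.mp hd)
    rw [← ha]
    simp [Δp]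
  obtain ⟨j, rfl⟩ : ∃ j, k = (n + 1) + j := ⟨k - (n + 1), by omega⟩
  rw [add_comm, Function.iterate_add_apply, h1, Function.iterate_fixed Δp_zero]

lemma fwdDiff_iter_eval (P : ℚ[X]) (k : ℕ) :
    (fwdDiff (1:ℚ))^[k] (fun x => P.eval x) = fun x => (Δp^[k] P).eval x := by
  induction k generalizing P with
  | zero => simp
  | succ k ih =>
    rw [Function.iterate_succ_apply, Function.iterate_succ_apply]
    have : fwdDiff (1:ℚ) (fun x => P.eval x) = fun x => (Δp P).eval x := by
      funext x
      simp [fwdDiff, Δp_eval]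
    rw [this, ih]

lemma newton (P : ℚ[X]) (t : ℕ) (y : ℚ) :
    P.eval (y + t) = ∑ k ∈ Finset.range (t + 1), (t.choose k : ℚ) * (Δp^[k] P).eval y := by
  have h := shift_eq_sum_fwdDiff_iter (1 : ℚ) (fun x => P.eval x) t y
  simp only [nsmul_eq_mul, mul_one, fwdDiff_iter_eval] at h
  exact h

lemma deriv_descPochhammer_eval_zero (j : ℕ) :
    (derivative (descPochhammer ℚ (j + 1))).eval 0 = (-1) ^ j * (Nat.factorial j) := by
  induction j with
  | zero => simp [descPochhammer_one]
  | succ j ih =>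
    rw [descPochhammer_succ_right, derivative_mul, eval_add, eval_mul, eval_mul]
    have h0 : (descPochhammer ℚ (j + 1)).eval 0 = 0 :=
      descPochhammer_ne_zero_eval_zero ℚ (by omega)
    rw [h0, ih]
    simp only [derivative_sub, derivative_X, eval_sub, eval_X, eval_natCast, zero_mul, add_zero,
      derivative_natCast, eval_zero, sub_zero]
    push_cast
    rw [Nat.factorial_succ]
    push_cast
    ring

/-- The key identity: for `P` of degree at most `n`,
`P'(y) = ∑_{k=0}^{n} (Δ^k P)(y)/k! * (descPochhammer_k)'(0)`. -/
lemma key (n : ℕ) (P : ℚ[X]) (hd : P.natDegree ≤ n) (y : ℚ) :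
    (derivative P).eval y = ∑ k ∈ Finset.range (n + 1),
      ((Δp^[k] P).eval y / (Nat.factorial k)) * (derivative (descPochhammer ℚ k)).eval 0 := by
  set R : ℚ[X] := ∑ k ∈ Finset.range (n + 1),
    C ((Δp^[k] P).eval y / (Nat.factorial k)) * descPochhammer ℚ k with hR
  have hPR : P.comp (C y + X) = R := by
    apply eq_of_infinite_eval_eq
    apply Set.Infinite.mono (s := Set.range ((↑·) : ℕ → ℚ))
    · rintro x ⟨t, rfl⟩
      simp only [Set.mem_setOf_eq, eval_comp, eval_add, eval_C, eval_X, hR]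
      rw [newton P t y]
      rw [eval_finset_sum]
      have hterm : ∀ k, eval (t : ℚ) (C ((Δp^[k] P).eval y / (Nat.factorial k)) * descPochhammer ℚ k)
          = (t.choose k : ℚ) * (Δp^[k] P).eval y := by
        intro k
        rw [eval_mul, eval_C, descPochhammer_eval_eq_descFactorial ℚ t k,
          Nat.descFactorial_eq_factorial_mul_choose]
        push_cast
        field_simp
      simp only [hterm]
      -- extend both sums to range (n + t + 2)
      have h1 : ∑ k ∈ Finset.range (t + 1), (t.choose k : ℚ) * (Δp^[k] P).eval y
          = ∑ k ∈ Finset.range (n + t + 2), (t.choose k : ℚ) * (Δp^[k] P).eval y := by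
        apply Finset.sum_subset (Finset.range_subset_range.mpr (by omega))
        intro k _ hk
        rw [Finset.mem_range, not_lt] at hk
        rw [Nat.choose_eq_zero_of_lt (by omega)]
        simp
      have h2 : ∑ k ∈ Finset.range (n + 1), (t.choose k : ℚ) * (Δp^[k] P).eval y
          = ∑ k ∈ Finset.range (n + t + 2), (t.choose k : ℚ) * (Δp^[k] P).eval y := by
        apply Finset.sum_subset (Finset.range_subset_range.mpr (by omega))
        intro k _ hk
        rw [Finset.mem_range, not_lt] at hk
        rw [Δp_iter_eq_zero hd (by omega)]
        simp
      rw [h1, h2]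
    · exact Set.infinite_range_of_injective Nat.cast_injective
  have hder := congrArg derivative hPR
  rw [derivative_comp] at hder
  have hder0 := congrArg (eval 0) hder
  simp only [derivative_add, derivative_C, derivative_X, zero_add, one_mul, eval_comp,
    eval_add, eval_C, eval_X, add_zero, hR] at hder0
  rw [hder0, derivative_sum, eval_finset_sum]
  congr 1
  funext k
  rw [derivative_C_mul, eval_mul, eval_C]

lemma intValued_Δp {P : ℚ[X]} (h : IntValued P) : IntValued (Δp P) := by
  intro m
  obtain ⟨z1, hz1⟩ := h (m + 1)
  obtain ⟨z0, hz0⟩ := h m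
  refine ⟨z1 - z0, ?_⟩
  rw [Δp_eval]
  have : (m : ℚ) + 1 = ((m + 1 : ℤ) : ℚ) := by push_cast; ring
  rw [this, hz1, hz0]
  push_cast
  ring

lemma intValued_Δp_iter (k : ℕ) {P : ℚ[X]} (h : IntValued P) : IntValued (Δp^[k] P) := by
  induction k generalizing P with
  | zero => simpa using h
  | succ k ih =>
    rw [Function.iterate_succ_apply]
    exact ih (intValued_Δp h)

lemma factorial_dvd_descPochhammer_eval (k : ℕ) (m : ℤ) :
    ((Nat.factorial k) : ℤ) ∣ (descPochhammer ℤ k).eval m := by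
  rcases le_or_gt 0 m with h | h
  · lift m to ℕ using h
    rw [descPochhammer_eval_eq_descFactorial]
    exact_mod_cast Int.natCast_dvd_natCast.mpr (Nat.factorial_dvd_descFactorial m k)
  · have key := ascPochhammer_eval_neg_eq_descPochhammer (R := ℤ) m k
    have hdesc : (descPochhammer ℤ k).eval m = (-1) ^ k * (ascPochhammer ℤ k).eval (-m) := by
      rw [key, ← mul_assoc, ← pow_add, ← two_mul, pow_mul]
      norm_num
    rw [hdesc]
    apply Dvd.dvd.mul_left
    have h0 : 0 ≤ -m := by omega
    lift -m to ℕ using h0 with a ha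
    have : (ascPochhammer ℤ k).eval ((a : ℕ) : ℤ) = ((a.ascFactorial k : ℕ) : ℤ) := by
      rw [← ascPochhammer_nat_eq_ascFactorial]
      exact (ascPochhammer_eval_cast (S := ℤ) k a).symm
    rw [this]
    exact_mod_cast Int.natCast_dvd_natCast.mpr (Nat.factorial_dvd_ascFactorial a k)

end IVAux

open IVAux Finset

theorem isLeast_c_eq_lcm (n : ℕ) (hn : 0 < n) :
    IsLeast {c : ℕ | 0 < c ∧ ∀ P : Polynomial ℚ, IntValued P → P.natDegree ≤ n →
      IntValued (C (c : ℚ) * derivative P)}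
      ((Finset.Icc 1 n).lcm id) := by
  set L := (Finset.Icc 1 n).lcm id with hLdef
  have hL0 : L ≠ 0 := by
    rw [hLdef, Ne, Finset.lcm_eq_zero_iff]
    rintro ⟨x, hx, hx0⟩
    rw [Finset.mem_Icc] at hx
    simp only [id_eq] at hx0
    omega
  constructor
  · refine ⟨Nat.pos_of_ne_zero hL0, ?_⟩
    intro P hP hdeg m
    have hkey := key n P hdeg (m : ℚ)
    have heval : (C (L : ℚ) * derivative P).eval (m : ℚ)
        = ∑ k ∈ Finset.range (n + 1),
          (L : ℚ) * (((Δp^[k] P).eval (m : ℚ) / (Nat.factorial k)) * (derivative (descPochhammer ℚ k)).eval 0) := by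
      rw [eval_mul, eval_C, hkey, Finset.mul_sum]
    rw [heval]
    have hmem : ∀ k ∈ Finset.range (n + 1),
        (L : ℚ) * (((Δp^[k] P).eval (m : ℚ) / (Nat.factorial k)) * (derivative (descPochhammer ℚ k)).eval 0)
          ∈ (Int.castRingHom ℚ).range := by
      intro k hk
      rw [Finset.mem_range] at hk
      rcases Nat.eq_zero_or_pos k with rfl | hkpos
      · simp only [descPochhammer_zero, derivative_one, eval_zero, mul_zero]
        exact ⟨0, by simp⟩
      obtain ⟨j, rfl⟩ := Nat.exists_eq_succ_of_ne_zero (by omega : k ≠ 0)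
      have hdvd : (j + 1) ∣ L := Finset.dvd_lcm (by rw [Finset.mem_Icc]; omega)
      obtain ⟨e, he⟩ := hdvd
      obtain ⟨b, hb⟩ := intValued_Δp_iter (j + 1) hP m
      rw [deriv_descPochhammer_eval_zero, hb]
      refine ⟨(-1) ^ j * e * b, ?_⟩
      have hfac : (Nat.factorial (j + 1) : ℚ) = (j + 1) * (Nat.factorial j) := by
        rw [Nat.factorial_succ]; push_cast; ring
      rw [he, hfac]
      have hj1 : ((j : ℚ) + 1) ≠ 0 := by positivity
      have hjf : (((Nat.factorial j) : ℚ)) ≠ 0 := by exact_mod_cast (Nat.factorial_ne_zero j)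
      simp only [eq_intCast]
      push_cast
      field_simp
    have := Subring.sum_mem _ hmem
    obtain ⟨z, hz⟩ := this
    exact ⟨z, hz.symm⟩
  · rintro c ⟨hc0, hc⟩
    apply Nat.le_of_dvd hc0
    apply Finset.lcm_dvd
    intro k hk
    rw [Finset.mem_Icc] at hk
    obtain ⟨j, rfl⟩ := Nat.exists_eq_succ_of_ne_zero (by omega : k ≠ 0)
    set P : ℚ[X] := C ((Nat.factorial (j + 1) : ℚ)⁻¹) * descPochhammer ℚ (j + 1) with hPdef
    have hIV : IntValued P := by
      intro m
      obtain ⟨w, hw⟩ := factorial_dvd_descPochhammer_eval (j + 1) m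
      refine ⟨w, ?_⟩
      rw [hPdef, eval_mul, eval_C]
      have hcast : (descPochhammer ℚ (j + 1)).eval (m : ℚ)
          = (((descPochhammer ℤ (j + 1)).eval m : ℤ) : ℚ) := (descPochhammer_eval_cast (R := ℚ) (j+1) m).symm
      rw [hcast, hw]
      have : ((Nat.factorial (j + 1) : ℕ) : ℚ) ≠ 0 := by exact_mod_cast Nat.factorial_ne_zero (j + 1)
      push_cast
      field_simp
    have hdeg : P.natDegree ≤ n := by
      calc P.natDegree ≤ (descPochhammer ℚ (j + 1)).natDegree := natDegree_C_mul_le _ _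
        _ = j + 1 := descPochhammer_natDegree ℚ (j + 1)
        _ ≤ n := hk.2
    obtain ⟨z, hz⟩ := hc P hIV hdeg 0
    rw [hPdef, derivative_C_mul, eval_mul, eval_C, eval_mul, eval_C, Int.cast_zero,
      deriv_descPochhammer_eval_zero] at hz
    -- hz : (c : ℚ) * ((((j+1)!)⁻¹) * ((-1)^j * j!)) = z
    have hq : (c : ℚ) * (-1) ^ j = (z : ℚ) * (j + 1) := by
      have hfac : (Nat.factorial (j + 1) : ℚ) = (j + 1) * (Nat.factorial j) := by
        rw [Nat.factorial_succ]; push_cast; ring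
      have hj1 : ((j : ℚ) + 1) ≠ 0 := by positivity
      have hjf : (((Nat.factorial j) : ℚ)) ≠ 0 := by exact_mod_cast (Nat.factorial_ne_zero j)
      rw [hfac] at hz
      field_simp at hz
      have hz' : ((c : ℚ) * (-1) ^ j) * (Nat.factorial j : ℚ)
          = ((z : ℚ) * ((j : ℚ) + 1)) * (Nat.factorial j : ℚ) := by linear_combination (Nat.factorial j : ℚ) * hz
      exact mul_right_cancel₀ hjf hz'
    have hint : (c : ℤ) * (-1) ^ j = z * (j + 1) := by exact_mod_cast hq
    have hdvd : ((j + 1 : ℕ) : ℤ) ∣ (c : ℤ) := by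
      refine ⟨z * (-1) ^ j, ?_⟩
      have h1 : ((-1 : ℤ) ^ j) * ((-1 : ℤ) ^ j) = 1 := by
        rw [← pow_add, ← two_mul, pow_mul]; norm_num
      push_cast
      linear_combination (-1 : ℤ) ^ j * hint - (c : ℤ) * h1
    exact_mod_cast hdvd
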